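/- Let n : ℕ and let p, q ∈ [0,1] with the corresponding nonnegativity/boundedness hypotheses. Then the probability mass function obtained by first sampling F from the binomial distribution with n trials and success probability p, and then, given F = k, sampling G from the binomial distribution with k trials and success probability q, equals the binomial distribution with n trials and success probability p·q; i.e., (PMF.binomial p n).bind (fun k => PMF.binomial q k) = PMF.binomial (p·q) n. (This is Theorem 1 of the paper on doubly stochastic binomial processes.) -/

import Mathlib

open scoped ENNReal
open Finset

private lemma map_binom_apply (q : ℝ≥0∞) (hq : q ≤ 1) {k n : ℕ} (h : k + 1 ≤ n + 1)
    (i : Fin (n+1)) :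
    ((PMF.binomial q.toNNReal (by simpa using ENNReal.toNNReal_mono ENNReal.one_ne_top hq) k).map (Fin.castLE h)) i =
      if (i : ℕ) ≤ k then (k.choose i : ℝ≥0∞) * (q ^ (i : ℕ) * (1-q) ^ (k - i)) else 0 := by
  rw [PMF.map_apply, tsum_fintype]
  split_ifs with hik
  · rw [Finset.sum_eq_single (⟨(i : ℕ), Nat.lt_succ_of_le hik⟩ : Fin (k+1))]
    · rw [if_pos (by ext; simp)]; erw [PMF.binomial_apply]
      simp only [Fin.val_last, ENNReal.coe_toNNReal (hq.trans_lt ENNReal.one_lt_top).ne]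
      ring
    · intro j _ hj
      rw [if_neg]
      intro hc
      exact hj (by ext; simpa using (congrArg Fin.val hc).symm)
    · simp
  · apply Finset.sum_eq_zero
    intro j _
    rw [if_neg]
    intro hc
    have := congrArg Fin.val hc
    simp at this
    omega

private lemma sum_shift {M : Type*} [AddCommMonoid M] (N m : ℕ) (h : ℕ → M) (hm : m ≤ N) :
    ∑ k ∈ range (N+1), (if m ≤ k then h k else 0) = ∑ j ∈ range (N - m + 1), h (m + j) := by
  rw [show N - m + 1 = N + 1 - m by omega, ← Finset.sum_Ico_eq_sum_range,
    Finset.range_eq_Ico, ← Finset.sum_Ico_consecutive _ (Nat.zero_le m) (by omega : m ≤ N + 1)]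
  have h1 : ∑ k ∈ Ico 0 m, (if m ≤ k then h k else 0) = 0 :=
    Finset.sum_eq_zero fun k hk => if_neg (by simp at hk; omega)
  have h2 : ∑ k ∈ Ico m (N+1), (if m ≤ k then h k else 0) = ∑ k ∈ Ico m (N+1), h k :=
    Finset.sum_congr rfl fun k hk => if_pos (by simp at hk; omega)
  rw [h1, h2, zero_add]

private lemma key_sum (p q : ℝ≥0∞) (hp : p ≤ 1) (hq : q ≤ 1) (n m : ℕ) (hm : m ≤ n) :
    ∑ k ∈ range (n+1), (if m ≤ k then
        (n.choose k : ℝ≥0∞) * (k.choose m) *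
          (p ^ k * (1-p) ^ (n - k) * q ^ m * (1-q) ^ (k - m)) else 0)
      = (p*q) ^ m * (1 - p*q) ^ (n - m) * (n.choose m) := by
  have hp1 : p ≠ ∞ := (hp.trans_lt ENNReal.one_lt_top).ne
  have hcomb : p * (1 - q) + (1 - p) = 1 - p * q := by
    rw [ENNReal.mul_sub (fun _ _ => hp1), mul_one, add_comm]
    exact tsub_add_tsub_cancel hp (mul_le_of_le_one_right' hq)
  rw [sum_shift n m _ hm, ← hcomb, add_pow, Finset.mul_sum, Finset.sum_mul]
  apply Finset.sum_congr rfl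
  intro j hj
  simp only [Finset.mem_range] at hj
  have hjn : m + j ≤ n := by omega
  have h1 : m + j - m = j := by omega
  have h2 : n - (m + j) = (n - m) - j := by omega
  have h3 : (n.choose (m + j) : ℝ≥0∞) * ((m + j).choose m)
      = (n.choose m : ℝ≥0∞) * ((n - m).choose j) := by
    rw [← Nat.cast_mul, ← Nat.cast_mul, Nat.choose_mul (Nat.le_add_right _ _),
      Nat.add_sub_cancel_left]
  rw [h1, h2, h3, pow_add, mul_pow, mul_pow]
  ring

/-- Theorem 1 on doubly stochastic binomial processes: sampling `F ∼ Binomial(n, p)`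
and then `G | F ∼ Binomial(F, q)` yields `G ∼ Binomial(n, p·q)`.  The inner binomial
on `Fin (F+1)` is embedded into `Fin (n+1)` via `Fin.castLE`. -/
theorem stmt_8 (n : ℕ) (p q : ℝ≥0∞) (hp : p ≤ 1) (hq : q ≤ 1) :
    (PMF.binomial p.toNNReal (by simpa using ENNReal.toNNReal_mono ENNReal.one_ne_top hp) n).bind
      (fun k => (PMF.binomial q.toNNReal (by simpa using ENNReal.toNNReal_mono ENNReal.one_ne_top hq) (k : ℕ)).map (Fin.castLE (Nat.succ_le_succ k.is_le))) =
    PMF.binomial (p * q).toNNReal (by simpa using ENNReal.toNNReal_mono ENNReal.one_ne_top (mul_le_one' hp hq)) n := by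
  ext i
  have him : (i : ℕ) ≤ n := i.is_le
  rw [PMF.bind_apply, tsum_fintype]
  have step : ∀ k : Fin (n+1),
      PMF.binomial p.toNNReal (by simpa using ENNReal.toNNReal_mono ENNReal.one_ne_top hp) n k *
        ((PMF.binomial q.toNNReal (by simpa using ENNReal.toNNReal_mono ENNReal.one_ne_top hq) (k : ℕ)).map (Fin.castLE (Nat.succ_le_succ k.is_le))) i
      = (fun kk => if (i : ℕ) ≤ kk then
          (n.choose kk : ℝ≥0∞) * ((kk).choose i) *
            (p ^ kk * (1-p) ^ (n - kk) * q ^ (i : ℕ) * (1-q) ^ (kk - (i : ℕ))) else 0) (k : ℕ) := by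
    intro k
    simp only
    erw [PMF.binomial_apply, map_binom_apply q hq]
    simp only [Fin.val_last, ENNReal.coe_toNNReal (hp.trans_lt ENNReal.one_lt_top).ne]
    split_ifs with h
    · ring
    · rw [mul_zero]
  rw [Finset.sum_congr rfl (fun k _ => step k),
    Fin.sum_univ_eq_sum_range (fun kk => if (i : ℕ) ≤ kk then
          (n.choose kk : ℝ≥0∞) * ((kk).choose i) *
            (p ^ kk * (1-p) ^ (n - kk) * q ^ (i : ℕ) * (1-q) ^ (kk - (i : ℕ))) else 0) (n+1),
    key_sum p q hp hq n i him, PMF.binomial_apply]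
  simp only [Fin.val_last, ENNReal.coe_toNNReal ((mul_le_one' hp hq).trans_lt ENNReal.one_lt_top).ne]
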